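/- Let f : G → H be a semi-planar function between finite abelian groups of the same even order k > 2, suppose the incidence graph of S(G,H;f) is not connected, and let h ∈ H with h ∉ P_0^1. Then the bijection of the vertex set of the incidence graph sending the point (x,y) to the point (x, y+h) and the line L(a,b) to the line L(a, b+h) is an automorphism of the incidence graph, and it maps the set of lines S_1 bijectively onto the set of lines S_2 (so it exchanges the two connected components). -/

import Mathlib

/-- A function `f : G → H` is *semi-planar* if for every nonzero `a : G` and every
`y : H`, the equation `f (x + a) - f x = y` has either 0 or exactly 2 solutions. -/
def IsSemiPlanar {G H : Type*} [AddGroup G] [AddGroup H] (f : G → H) : Prop :=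
  ∀ a : G, a ≠ 0 → ∀ y : H,
    Nat.card {x : G // f (x + a) - f x = y} = 0 ∨
    Nat.card {x : G // f (x + a) - f x = y} = 2

/-- The point `p = (x, y)` is incident with the line `l = L(a, b)` iff `y = f (x - a) + b`. -/
def Incid {G H : Type*} [Sub G] [Add H] (f : G → H) (p l : G × H) : Prop :=
  p.2 = f (p.1 - l.1) + l.2

/-- The adjacency relation of the incidence graph of `S(G,H;f)`: points on the left,
lines on the right, a point adjacent to a line iff incident. -/
def IncAdj {G H : Type*} [Sub G] [Add H] (f : G → H) :
    (G × H) ⊕ (G × H) → (G × H) ⊕ (G × H) → Prop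
  | Sum.inl p, Sum.inr l => Incid f p l
  | Sum.inr l, Sum.inl p => Incid f p l
  | _, _ => False

/-- The incidence graph of `S(G,H;f)`. -/
def incGraph {G H : Type*} [Sub G] [Add H] (f : G → H) :
    SimpleGraph ((G × H) ⊕ (G × H)) where
  Adj := IncAdj f
  symm := by
    constructor
    intro v w h
    cases v <;> cases w <;> exact h
  loopless := by
    constructor
    intro v h
    cases v <;> exact h

/-- The line `L(a,b)` belongs to the substructure `S₁`, i.e. lies in the same
connected component of the incidence graph as the line `L(0,0)`. -/
def InS1 {G H : Type*} [SubtractionMonoid G] [SubNegMonoid H] (f : G → H) (l : G × H) : Prop :=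
  (incGraph f).Reachable (Sum.inr l) (Sum.inr ((0 : G), (0 : H)))

/-- The vertex map sending the point `(x,y)` to `(x, y+h)` and the line `L(a,b)` to
`L(a, b+h)`. -/
def shiftMap {G H : Type*} [Add H] (h : H) :
    (G × H) ⊕ (G × H) → (G × H) ⊕ (G × H)
  | Sum.inl p => Sum.inl (p.1, p.2 + h)
  | Sum.inr l => Sum.inr (l.1, l.2 + h)

section Aux

variable {G H : Type*} [AddCommGroup G] [AddCommGroup H]

lemma shift_adj (f : G → H) (h : H) (v w : (G × H) ⊕ (G × H)) :
    (incGraph f).Adj (shiftMap h v) (shiftMap h w) ↔ (incGraph f).Adj v w := by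
  rcases v with p | l <;> rcases w with q | m
  · exact Iff.rfl
  · show Incid f (p.1, p.2 + h) (m.1, m.2 + h) ↔ Incid f p m
    simp only [Incid]
    rw [← add_assoc]
    exact add_left_inj h
  · show Incid f (q.1, q.2 + h) (l.1, l.2 + h) ↔ Incid f q l
    simp only [Incid]
    rw [← add_assoc]
    exact add_left_inj h
  · exact Iff.rfl

/-- The shift by `h` as a graph homomorphism. -/
def shiftHom (f : G → H) (h : H) : incGraph f →g incGraph f where
  toFun := shiftMap h
  map_rel' := fun hadj => (shift_adj f h _ _).mpr hadj

lemma shift_reach (f : G → H) (h : H) {v w : (G × H) ⊕ (G × H)}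
    (hr : (incGraph f).Reachable v w) :
    (incGraph f).Reachable (shiftMap h v) (shiftMap h w) :=
  hr.map (shiftHom f h)

/-- Every line `L(a,b)` is at distance two from the line `L(0, b + f 0 - f a)`. -/
lemma line_reach (f : G → H) (a : G) (b : H) :
    (incGraph f).Reachable (Sum.inr (a, b)) (Sum.inr ((0 : G), b + f 0 - f a)) := by
  have h1 : (incGraph f).Adj (Sum.inr (a, b)) (Sum.inl (a, f 0 + b)) := by
    show Incid f (a, f 0 + b) (a, b)
    simp [Incid]
  have h2 : (incGraph f).Adj (Sum.inl (a, f 0 + b)) (Sum.inr ((0 : G), b + f 0 - f a)) := by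
    show Incid f (a, f 0 + b) ((0 : G), b + f 0 - f a)
    show f 0 + b = f (a - 0) + (b + f 0 - f a)
    rw [sub_zero]
    abel
  exact h1.reachable.trans h2.reachable

/-- `P_0^1` as a subgroup of `H`. -/
def S1sub (f : G → H) : AddSubgroup H where
  carrier := {b | InS1 f ((0 : G), b)}
  zero_mem' := SimpleGraph.Reachable.refl _
  add_mem' := by
    intro x y hx hy
    have h2 : (incGraph f).Reachable (Sum.inr ((0 : G), x + y)) (Sum.inr ((0 : G), y)) := by
      have := shift_reach f y hx
      simpa [shiftMap] using this
    exact h2.trans hy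
  neg_mem' := by
    intro x hx
    have := shift_reach f (-x) hx
    simp only [shiftMap, add_neg_cancel, zero_add] at this
    exact this.symm

lemma inS1_iff (f : G → H) (a : G) (b : H) :
    InS1 f (a, b) ↔ b + f 0 - f a ∈ S1sub f := by
  constructor
  · intro hr
    exact (line_reach f a b).symm.trans hr
  · intro hm
    exact (line_reach f a b).trans hm

/-- Every difference value `f (u + a) - f u` lies in the coset `(f a - f 0) + S1sub f`. -/
lemma diff_mem (f : G → H) (a : G) (u : G) :
    f (u + a) - f u + f 0 - f a ∈ S1sub f := by
  rw [← inS1_iff]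
  have h1 : (incGraph f).Adj (Sum.inr (a, f (u + a) - f u)) (Sum.inl (u + a, f (u + a))) := by
    show Incid f (u + a, f (u + a)) (a, f (u + a) - f u)
    show f (u + a) = f (u + a - a) + (f (u + a) - f u)
    rw [add_sub_cancel_right]
    abel
  have h2 : (incGraph f).Adj (Sum.inl (u + a, f (u + a)))
      (Sum.inr ((0 : G), (0 : H))) := by
    show Incid f (u + a, f (u + a)) ((0 : G), (0 : H))
    show f (u + a) = f (u + a - 0) + 0
    rw [sub_zero, add_zero]
  exact h1.reachable.trans h2.reachable

lemma card_bound [Fintype G] [Fintype H]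
    (hcard : Fintype.card G = Fintype.card H)
    (f : G → H) (hf : IsSemiPlanar f) (hk : 1 < Fintype.card G) :
    Fintype.card H ≤ 2 * Nat.card (S1sub f) := by
  classical
  obtain ⟨a, ha⟩ := Fintype.exists_ne_of_one_lt_card hk (0 : G)
  set T : Finset H := Finset.image (fun u => f (u + a) - f u) Finset.univ with hT
  -- each fibre has exactly two elements
  have hcount : Fintype.card G = 2 * T.card := by
    have h1 := Finset.card_eq_sum_card_image (fun u => f (u + a) - f u)
      (Finset.univ : Finset G)
    rw [Finset.card_univ] at h1
    have h2 : ∀ y ∈ T, (Finset.univ.filter fun x => f (x + a) - f x = y).card = 2 := by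
      intro y hy
      have hnat : Nat.card {x : G // f (x + a) - f x = y}
          = (Finset.univ.filter fun x => f (x + a) - f x = y).card := by
        rw [Nat.card_eq_fintype_card, Fintype.card_subtype]
      rcases hf a ha y with h0 | h2
      · exfalso
        obtain ⟨u, _, hu⟩ := Finset.mem_image.mp hy
        have : (Finset.univ.filter fun x => f (x + a) - f x = y).Nonempty :=
          ⟨u, by simp [hu]⟩
        rw [hnat] at h0
        exact Finset.card_ne_zero_of_mem this.choose_spec h0
      · rw [← hnat, h2]
    rw [h1, Finset.sum_congr rfl h2, Finset.sum_const, smul_eq_mul, mul_comm]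
  -- inject `T` into `S1sub f`
  haveI : Fintype ↥(S1sub f) := Fintype.ofFinite _
  have hinj : T.card ≤ Nat.card (S1sub f) := by
    rw [Nat.card_eq_fintype_card]
    have := Fintype.card_le_of_injective
      (fun y : {y : H // y ∈ T} => (⟨y.1 + f 0 - f a, by
        obtain ⟨u, _, hu⟩ := Finset.mem_image.mp y.2
        rw [← hu]; exact diff_mem f a u⟩ : ↥(S1sub f)))
      (by
        intro y1 y2 hxy
        have : y1.1 + f 0 - f a = y2.1 + f 0 - f a := congrArg Subtype.val hxy
        have : (y1 : H) = y2 := by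
          have h' := this
          rwa [sub_left_inj, add_left_inj] at h'
        exact Subtype.ext this)
    rwa [Fintype.card_coe] at this
  omega

lemma index_two [Fintype G] [Fintype H]
    (hcard : Fintype.card G = Fintype.card H)
    (f : G → H) (hf : IsSemiPlanar f) (hk : 1 < Fintype.card G)
    {h : H} (hh : h ∉ S1sub f) :
    (S1sub f).index = 2 := by
  have hmul : (S1sub f).index * Nat.card (S1sub f) = Nat.card H :=
    AddSubgroup.index_mul_card (S1sub f)
  have hNH : Nat.card H = Fintype.card H := Nat.card_eq_fintype_card
  have hb := card_bound hcard f hf hk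
  have hpos : 0 < Nat.card (S1sub f) := Nat.card_pos
  have hHpos : 0 < Fintype.card H := Fintype.card_pos
  have hne1 : (S1sub f).index ≠ 1 := by
    intro h1
    rw [AddSubgroup.index_eq_one] at h1
    exact hh (h1 ▸ AddSubgroup.mem_top h)
  have hle : (S1sub f).index * Nat.card (S1sub f) ≤ 2 * Nat.card (S1sub f) := by
    rw [hmul, hNH]; exact hb
  have hle2 : (S1sub f).index ≤ 2 := Nat.le_of_mul_le_mul_right hle hpos
  have hne0 : (S1sub f).index ≠ 0 := by
    intro h0
    rw [h0, zero_mul] at hmul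
    omega
  omega

end Aux

/-- If `k > 2`, the incidence graph of `S(G,H;f)` is not connected, and `h ∉ P_0^1`,
then the bijection `(x,y) ↦ (x,y+h)`, `L(a,b) ↦ L(a,b+h)` is an automorphism of the
incidence graph mapping `S₁` bijectively onto `S₂`. -/
theorem shift_is_isomorphism {G H : Type*} [AddCommGroup G] [AddCommGroup H]
    [Fintype G] [Fintype H]
    (hcard : Fintype.card G = Fintype.card H) (heven : Even (Fintype.card G))
    (f : G → H) (hf : IsSemiPlanar f)
    (hk : 2 < Fintype.card G) (hnc : ¬ (incGraph f).Connected)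
    (h : H) (hh : ¬ InS1 f ((0 : G), h)) :
    Function.Bijective (shiftMap (G := G) h) ∧
    (∀ v w : (G × H) ⊕ (G × H),
      (incGraph f).Adj (shiftMap h v) (shiftMap h w) ↔ (incGraph f).Adj v w) ∧
    (fun l : G × H => (l.1, l.2 + h)) '' {l : G × H | InS1 f l}
      = {l : G × H | ¬ InS1 f l} := by
  have hhS : h ∉ S1sub f := hh
  have hidx : (S1sub f).index = 2 := index_two hcard f hf (by omega) hhS
  refine ⟨?_, fun v w => shift_adj f h v w, ?_⟩
  · -- bijective with inverse shift by -h
    refine Function.bijective_iff_has_inverse.mpr ⟨shiftMap (-h), ?_, ?_⟩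
    · intro v; rcases v with p | l <;> simp [shiftMap]
    · intro v; rcases v with p | l <;> simp [shiftMap]
  · ext l
    rcases l with ⟨a, b⟩
    simp only [Set.mem_image, Set.mem_setOf_eq]
    constructor
    · rintro ⟨⟨a', b'⟩, hl', heq⟩
      obtain ⟨rfl, rfl⟩ : a' = a ∧ b' + h = b := by
        constructor
        · exact congrArg Prod.fst heq
        · exact congrArg Prod.snd heq
      intro hs
      have m1 : b' + f 0 - f a' ∈ S1sub f := (inS1_iff f a' b').mp hl'
      have m2 : b' + h + f 0 - f a' ∈ S1sub f := (inS1_iff f a' (b' + h)).mp hs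
      have : (b' + h + f 0 - f a') - (b' + f 0 - f a') ∈ S1sub f :=
        (S1sub f).sub_mem m2 m1
      have he : (b' + h + f 0 - f a') - (b' + f 0 - f a') = h := by abel
      rw [he] at this
      exact hhS this
    · intro hnl
      refine ⟨(a, b - h), ?_, by simp⟩
      have hnm : b + f 0 - f a ∉ S1sub f := fun hm => hnl ((inS1_iff f a b).mpr hm)
      have hneg : -h ∉ S1sub f := fun hm => hhS (by simpa using (S1sub f).neg_mem hm)
      have hmem : (b + f 0 - f a) + (-h) ∈ S1sub f := by
        rw [AddSubgroup.add_mem_iff_of_index_two hidx]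
        exact ⟨fun hx => absurd hx hnm, fun hx => absurd hx hneg⟩
      rw [inS1_iff]
      have he : b - h + f 0 - f a = (b + f 0 - f a) + (-h) := by abel
      rw [he]
      exact hmem
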